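/- Commutation of head reductions (multi-step): if M head-σ-reduces in several steps to L and L head-β_v-reduces in several steps to N, then there exists L' such that M head-β_v-reduces (in several steps) to L' and L' head-σ-reduces (in several steps) to N. -/

import Mathlib

/-- Terms of the call-by-value λ-calculus, in de Bruijn notation. -/
inductive Term : Type
  | var : ℕ → Term
  | lam : Term → Term
  | app : Term → Term → Term

namespace Term

/-- Values are variables and abstractions. -/
def isValue : Term → Prop
  | var _ => True
  | lam _ => True
  | app _ _ => False

/-- Shift free de Bruijn indices ≥ d by one. -/
def lift (d : ℕ) : Term → Term
  | var n => if n < d then var n else var (n+1)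
  | lam M => lam (lift (d+1) M)
  | app M N => app (lift d M) (lift d N)

/-- Capture-avoiding substitution of `V` for index `k`. -/
def subst : Term → ℕ → Term → Term
  | var n, k, V => if n = k then V else if k < n then var (n-1) else var n
  | lam M, k, V => lam (subst M (k+1) (lift 0 V))
  | app M N, k, V => app (subst M k V) (subst N k V)

/-- Apply a term to a list of arguments: `appList M [M₁,…,Mₘ] = M M₁ … Mₘ`. -/
def appList : Term → List Term → Term
  | M, [] => M
  | M, N :: Ns => appList (app M N) Ns

/-- Root σ-reduction rules σ₁ and σ₃ (freshness handled by lifting). -/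
inductive SigmaBase : Term → Term → Prop
  | sigma1 (M N L : Term) :
      SigmaBase (app (app (lam M) N) L) (app (lam (app M (lift 0 L))) N)
  | sigma3 (V L N : Term) : isValue V →
      SigmaBase (app V (app (lam L) N)) (app (lam (app (lift 0 V) L)) N)

/-- Root rules of v-reduction: β_v, σ₁ and σ₃. -/
inductive VBase : Term → Term → Prop
  | beta (M V : Term) : isValue V → VBase (app (lam M) V) (subst M 0 V)
  | sigma1 (M N L : Term) :
      VBase (app (app (lam M) N) L) (app (lam (app M (lift 0 L))) N)
  | sigma3 (V L N : Term) : isValue V →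
      VBase (app V (app (lam L) N)) (app (lam (app (lift 0 V) L)) N)

/-- Contextual closure of a root relation. -/
inductive Ctx (r : Term → Term → Prop) : Term → Term → Prop
  | base {M M'} : r M M' → Ctx r M M'
  | lam {M M'} : Ctx r M M' → Ctx r (lam M) (lam M')
  | appL {M M'} (N : Term) : Ctx r M M' → Ctx r (app M N) (app M' N)
  | appR (M : Term) {N N'} : Ctx r N N' → Ctx r (app M N) (app M N')

/-- σ-reduction: contextual closure of σ₁ ∪ σ₃. -/
def SigmaRed : Term → Term → Prop := Ctx SigmaBase

/-- v-reduction: contextual closure of β_v ∪ σ₁ ∪ σ₃. -/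
def Red : Term → Term → Prop := Ctx VBase

/-- Head β_v-reduction. -/
inductive HeadBeta : Term → Term → Prop
  | beta (M V : Term) (Ms : List Term) : isValue V →
      HeadBeta (appList (app (lam M) V) Ms) (appList (subst M 0 V) Ms)
  | right (V : Term) {N N'} (Ms : List Term) : isValue V → HeadBeta N N' →
      HeadBeta (appList (app V N) Ms) (appList (app V N') Ms)

/-- Head σ-reduction. -/
inductive HeadSigma : Term → Term → Prop
  | sigma1 (M N L : Term) (Ms : List Term) :
      HeadSigma (appList (app (app (lam M) N) L) Ms)
                (appList (app (lam (app M (lift 0 L))) N) Ms)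
  | sigma3 (V L N : Term) (Ms : List Term) : isValue V →
      HeadSigma (appList (app V (app (lam L) N)) Ms)
                (appList (app (lam (app (lift 0 V) L)) N) Ms)
  | right (V : Term) {N N'} (Ms : List Term) : isValue V → HeadSigma N N' →
      HeadSigma (appList (app V N) Ms) (appList (app V N') Ms)

/-- Head v-reduction: head β_v ∪ head σ. -/
def HeadRed (M N : Term) : Prop := HeadBeta M N ∨ HeadSigma M N

/-- Internal v-reduction: v-steps that are not head v-steps. -/
def IntRed (M N : Term) : Prop := Red M N ∧ ¬ HeadRed M N

/-- Parallel reduction of the shuffling calculus λ_v^σ. -/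
inductive Par : Term → Term → Prop
  | var (x : ℕ) {Ms Ms' : List Term} : List.Forall₂ Par Ms Ms' →
      Par (appList (var x) Ms) (appList (var x) Ms')
  | lam {M M'} {Ms Ms' : List Term} : Par M M' → List.Forall₂ Par Ms Ms' →
      Par (appList (lam M) Ms) (appList (lam M') Ms')
  | beta {M M' V V'} {Ms Ms' : List Term} : isValue V → isValue V' →
      Par M M' → Par V V' → List.Forall₂ Par Ms Ms' →
      Par (appList (app (lam M) V) Ms) (appList (subst M' 0 V') Ms')
  | sigma1 {M M' N N' L L'} {Ms Ms' : List Term} :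
      Par M M' → Par N N' → Par L L' → List.Forall₂ Par Ms Ms' →
      Par (appList (app (app (lam M) N) L) Ms)
          (appList (app (lam (app M' (lift 0 L'))) N') Ms')
  | sigma3 {V V' L L' N N'} {Ms Ms' : List Term} : isValue V → isValue V' →
      Par V V' → Par L L' → Par N N' → List.Forall₂ Par Ms Ms' →
      Par (appList (app V (app (lam L) N)) Ms)
          (appList (app (lam (app (lift 0 V') L')) N') Ms')

/-- Internal parallel reduction. -/
inductive IPar : Term → Term → Prop
  | lam {N N'} : Par N N' → IPar (lam N) (lam N')
  | var (x : ℕ) : IPar (var x) (var x)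
  | right {V V' N N'} {Ms Ms' : List Term} : isValue V → isValue V' →
      Par V V' → IPar N N' → List.Forall₂ Par Ms Ms' →
      IPar (appList (app V N) Ms) (appList (app V' N') Ms')

/-- One-hole contexts. -/
inductive Ctx1 : Type
  | hole : Ctx1
  | lam : Ctx1 → Ctx1
  | appL : Ctx1 → Term → Ctx1
  | appR : Term → Ctx1 → Ctx1

/-- Capture-allowing hole filling. -/
def fill : Ctx1 → Term → Term
  | .hole, M => M
  | .lam C, M => lam (fill C M)
  | .appL C N, M => app (fill C M) N
  | .appR N C, M => app N (fill C M)

/-- `M` halts: head β_v-reduction from `M` reaches a value. -/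
def Halts (M : Term) : Prop := ∃ V, isValue V ∧ Relation.ReflTransGen HeadBeta M V

end Term

namespace Term

/-- Compact characterization of head β-reduction. -/
inductive HB : Term → Term → Prop
  | beta {M V} : isValue V → HB (app (lam M) V) (subst M 0 V)
  | right {V N N'} : isValue V → HB N N' → HB (app V N) (app V N')
  | left {M M' N} : HB M M' → HB (app M N) (app M' N)

/-- Compact characterization of head σ-reduction. -/
inductive HS : Term → Term → Prop
  | sigma1 {M N L} : HS (app (app (lam M) N) L) (app (lam (app M (lift 0 L))) N)
  | sigma3 {V L N} : isValue V →
      HS (app V (app (lam L) N)) (app (lam (app (lift 0 V) L)) N)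
  | right {V N N'} : isValue V → HS N N' → HS (app V N) (app V N')
  | left {M M' N} : HS M M' → HS (app M N) (app M' N)

lemma appList_append (Ms Ns : List Term) : ∀ M,
    appList M (Ms ++ Ns) = appList (appList M Ms) Ns := by
  induction Ms with
  | nil => intro M; rfl
  | cons L Ms ih => intro M; simp [appList, ih]

lemma headBeta_app {M M'} (N : Term) (h : HeadBeta M M') :
    HeadBeta (app M N) (app M' N) := by
  cases h with
  | beta A V Ms hV =>
      have := HeadBeta.beta A V (Ms ++ [N]) hV
      simpa [appList_append, appList] using this
  | right V Ms hV hN =>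
      have := HeadBeta.right V (Ms ++ [N]) hV hN
      simpa [appList_append, appList] using this

lemma headSigma_app {M M'} (N : Term) (h : HeadSigma M M') :
    HeadSigma (app M N) (app M' N) := by
  cases h with
  | sigma1 A B C Ms =>
      have := HeadSigma.sigma1 A B C (Ms ++ [N])
      simpa [appList_append, appList] using this
  | sigma3 V A B Ms hV =>
      have := HeadSigma.sigma3 V A B (Ms ++ [N]) hV
      simpa [appList_append, appList] using this
  | right V Ms hV hN =>
      have := HeadSigma.right V (Ms ++ [N]) hV hN
      simpa [appList_append, appList] using this

lemma hb_headBeta {M N} (h : HB M N) : HeadBeta M N := by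
  induction h with
  | beta hV => exact HeadBeta.beta _ _ [] hV
  | right hV _ ih => exact HeadBeta.right _ [] hV ih
  | left _ ih => exact headBeta_app _ ih

lemma hs_headSigma {M N} (h : HS M N) : HeadSigma M N := by
  induction h with
  | sigma1 => exact HeadSigma.sigma1 _ _ _ []
  | sigma3 hV => exact HeadSigma.sigma3 _ _ _ [] hV
  | right hV _ ih => exact HeadSigma.right _ [] hV ih
  | left _ ih => exact headSigma_app _ ih

lemma hb_appList (Ms : List Term) : ∀ {M N}, HB M N → HB (appList M Ms) (appList N Ms) := by
  induction Ms with
  | nil => intro M N h; exact h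
  | cons L Ms ih => intro M N h; exact ih (HB.left h)

lemma hs_appList (Ms : List Term) : ∀ {M N}, HS M N → HS (appList M Ms) (appList N Ms) := by
  induction Ms with
  | nil => intro M N h; exact h
  | cons L Ms ih => intro M N h; exact ih (HS.left h)

lemma headBeta_hb {M N} (h : HeadBeta M N) : HB M N := by
  induction h with
  | beta A V Ms hV => exact hb_appList _ (HB.beta hV)
  | right V Ms hV _ ih => exact hb_appList _ (HB.right hV ih)

lemma headSigma_hs {M N} (h : HeadSigma M N) : HS M N := by
  induction h with
  | sigma1 A B C Ms => exact hs_appList _ HS.sigma1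
  | sigma3 V A B Ms hV => exact hs_appList _ (HS.sigma3 hV)
  | right V Ms hV _ ih => exact hs_appList _ (HS.right hV ih)

lemma subst_lift (M : Term) : ∀ (k : ℕ) (W : Term), subst (lift k M) k W = M := by
  induction M with
  | var n =>
      intro k W
      rcases Nat.lt_or_ge n k with h | h
      · have h1 : ¬ n = k := by omega
        have h2 : ¬ k < n := by omega
        simp [lift, subst, h, h1, h2]
      · have h1 : ¬ n < k := by omega
        have h2 : ¬ n + 1 = k := by omega
        have h3 : k < n + 1 := by omega
        simp [lift, subst, h1, h2, h3]
  | lam M ih => intro k W; simp [lift, subst, ih]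
  | app M N ihM ihN => intro k W; simp [lift, subst, ihM, ihN]

lemma hs_not_value {P P'} (h : HS P P') : ¬ isValue P' := by
  intro hv; cases h <;> exact hv

lemma hb_src_not_value {P P'} (h : HB P P') : ¬ isValue P := by
  intro hv; cases h <;> exact hv

lemma hs_not_lam {P P' A} (h : HS P P') : P' ≠ lam A := by
  intro hv; cases h <;> simp_all

lemma hsStar_right {V N N'} (hV : isValue V) (h : Relation.ReflTransGen HS N N') :
    Relation.ReflTransGen HS (app V N) (app V N') :=
  Relation.ReflTransGen.lift (app V) (fun _ _ h => HS.right hV h) _ _ h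

lemma hsStar_left {P P'} (Q : Term) (h : Relation.ReflTransGen HS P P') :
    Relation.ReflTransGen HS (app P Q) (app P' Q) :=
  Relation.ReflTransGen.lift (app · Q) (fun _ _ h => HS.left h) _ _ h

lemma comm1 : ∀ {M L N}, HS M L → HB L N →
    ∃ L2, HB M L2 ∧ Relation.ReflTransGen HS L2 N := by
  intro M L N hσ
  induction hσ generalizing N with
  | @sigma1 A B C =>
      intro hβ
      cases hβ with
      | beta hV =>
          refine ⟨app (subst A 0 B) C, HB.left (HB.beta hV), ?_⟩
          simp only [subst, subst_lift]
          exact .refl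
      | @right _ _ B' hV hB =>
          exact ⟨app (app (lam A) B') C,
            HB.left (HB.right (by trivial) hB),
            Relation.ReflTransGen.single HS.sigma1⟩
      | left hB => cases hB
  | @sigma3 V A B hV =>
      intro hβ
      cases hβ with
      | beta hB =>
          refine ⟨app V (subst A 0 B), HB.right hV (HB.beta hB), ?_⟩
          simp only [subst, subst_lift]
          exact .refl
      | @right _ _ B' _ hB =>
          exact ⟨app V (app (lam A) B'),
            HB.right hV (HB.right (by trivial) hB),
            Relation.ReflTransGen.single (HS.sigma3 hV)⟩
      | left hB => cases hB
  | @right V P P' hV hPP' ih =>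
      intro hβ
      cases hβ with
      | beta hv' => exact absurd hv' (hs_not_value hPP')
      | right _ hB =>
          obtain ⟨L2, h1, h2⟩ := ih hB
          exact ⟨app V L2, HB.right hV h1, hsStar_right hV h2⟩
      | left hB => exact absurd hV (hb_src_not_value hB)
  | @left P P' Q hPP' ih =>
      intro hβ
      cases hβ with
      | beta hv' => exact absurd rfl (hs_not_lam hPP')
      | right hv' _ => exact absurd hv' (hs_not_value hPP')
      | left hB =>
          obtain ⟨L2, h1, h2⟩ := ih hB
          exact ⟨app L2 Q, HB.left h1, hsStar_left Q h2⟩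

lemma commStar1 {M L N} (h1 : Relation.ReflTransGen HS M L) (hβ : HB L N) :
    ∃ L2, HB M L2 ∧ Relation.ReflTransGen HS L2 N := by
  induction h1 using Relation.ReflTransGen.head_induction_on with
  | refl => exact ⟨N, hβ, .refl⟩
  | head hac hcb ih =>
      obtain ⟨L2, h2, h3⟩ := ih
      obtain ⟨L3, h4, h5⟩ := comm1 hac h2
      exact ⟨L3, h4, h5.trans h3⟩

lemma commStar {M L N} (h1 : Relation.ReflTransGen HS M L)
    (h2 : Relation.ReflTransGen HB L N) :
    ∃ L2, Relation.ReflTransGen HB M L2 ∧ Relation.ReflTransGen HS L2 N := by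
  induction h2 using Relation.ReflTransGen.head_induction_on generalizing M with
  | refl => exact ⟨M, .refl, h1⟩
  | head hac hcb ih =>
      obtain ⟨L2, hb, hs⟩ := commStar1 h1 hac
      obtain ⟨L3, hb3, hs3⟩ := ih hs
      exact ⟨L3, hb3.head hb, hs3⟩

end Term

open Term Relation in
theorem head_commute_multi {M L N : Term}
    (h1 : ReflTransGen HeadSigma M L) (h2 : ReflTransGen HeadBeta L N) :
    ∃ L2, ReflTransGen HeadBeta M L2 ∧ ReflTransGen HeadSigma L2 N := by
  obtain ⟨L2, hb, hs⟩ :=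
    commStar (Relation.ReflTransGen.mono (fun a b h => headSigma_hs h) _ _ h1)
      (Relation.ReflTransGen.mono (fun a b h => headBeta_hb h) _ _ h2)
  exact ⟨L2, Relation.ReflTransGen.mono (fun a b h => hb_headBeta h) _ _ hb,
    Relation.ReflTransGen.mono (fun a b h => hs_headSigma h) _ _ hs⟩
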